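/- Let λP, λV > 0 with λP ≠ λV, and for each t > 0 let X_t and Y_t be independent Poisson-distributed random variables with means λP·t and λV·t. Then Var[min(X_t, Y_t)] / t converges to min(λP, λV) as t → ∞. -/

import Mathlib

open MeasureTheory ProbabilityTheory Filter

section SFauxiliary

open Real
open scoped Nat ENNReal NNReal


lemma SFaux_hasSum_desc (k : ℕ) (x : ℝ) :
    HasSum (fun n : ℕ => (n.descFactorial k : ℝ) * x ^ n / n !) (x ^ k * Real.exp x) := by
  set f : ℕ → ℝ := fun n => (n.descFactorial k : ℝ) * x ^ n / n ! with hf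
  have hexp : HasSum (fun m : ℕ => x ^ k * (x ^ m / m !)) (x ^ k * Real.exp x) := by
    rw [Real.exp_eq_exp_ℝ]
    exact (NormedSpace.expSeries_div_hasSum_exp x).mul_left _
  have key : ∀ m : ℕ, f (m + k) = x ^ k * (x ^ m / m !) := by
    intro m
    have h1 : m ! * ((m + k).descFactorial k) = (m + k)! := by
      have := Nat.factorial_mul_descFactorial (n := m + k) (k := k) (Nat.le_add_left k m)
      simpa using this
    have h2 : ((m + k)! : ℝ) = (m ! : ℝ) * ((m + k).descFactorial k : ℝ) := by
      exact_mod_cast h1.symm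
    have hm : (m ! : ℝ) ≠ 0 := Nat.cast_ne_zero.2 (Nat.factorial_ne_zero m)
    have hmk : ((m + k)! : ℝ) ≠ 0 := Nat.cast_ne_zero.2 (Nat.factorial_ne_zero _)
    have hd : ((m + k).descFactorial k : ℝ) ≠ 0 := by
      intro h0
      rw [h0, mul_zero] at h2
      exact hmk h2
    simp only [hf]
    field_simp [h2, pow_add]
    rw [h2]; ring
  have hzero : ∀ i ∈ Finset.range k, f i = 0 := by
    intro i hi
    have : i.descFactorial k = 0 :=
      Nat.descFactorial_eq_zero_iff_lt.2 (Finset.mem_range.1 hi)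
    simp [hf, this]
  refine (hasSum_nat_add_iff' k).1 ?_
  rw [Finset.sum_eq_zero hzero, sub_zero]
  exact hexp.congr_fun key



lemma SFaux_poisson_int (r : ℝ≥0) (g : ℕ → ℝ) (hg : ∀ n, 0 ≤ g n) {S : ℝ}
    (h : HasSum (fun n => g n * poissonPMFReal r n) S) :
    Integrable g (poissonMeasure r) ∧ ∫ n, g n ∂(poissonMeasure r) = S := by
  have hmeas : Measurable g := measurable_from_nat
  have hpm : ∀ n : ℕ, (poissonMeasure r) {n} = ENNReal.ofReal (poissonPMFReal r n) := by
    intro n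
    rw [poissonMeasure_singleton]
    rfl
  have hterm : ∀ n, 0 ≤ g n * poissonPMFReal r n :=
    fun n => mul_nonneg (hg n) poissonPMFReal_nonneg
  have hint : Integrable g (poissonMeasure r) := by
    refine ⟨hmeas.aestronglyMeasurable, ?_⟩
    show (∫⁻ n, ‖g n‖ₑ ∂(poissonMeasure r)) < ⊤
    calc ∫⁻ n, ‖g n‖ₑ ∂(poissonMeasure r)
        = ∑' n : ℕ, ‖g n‖ₑ * (poissonMeasure r) {n} := lintegral_countable' _
      _ = ∑' n : ℕ, ENNReal.ofReal (g n * poissonPMFReal r n) := by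
          refine tsum_congr fun n => ?_
          rw [hpm n, Real.enorm_eq_ofReal (hg n),
            ← ENNReal.ofReal_mul (hg n)]
      _ = ENNReal.ofReal S := by
          rw [← ENNReal.ofReal_tsum_of_nonneg hterm h.summable, h.tsum_eq]
      _ < ⊤ := ENNReal.ofReal_lt_top
  refine ⟨hint, ?_⟩
  rw [integral_countable hint]
  rw [← h.tsum_eq]
  refine tsum_congr fun n => ?_
  rw [measureReal_def, hpm n, ENNReal.toReal_ofReal poissonPMFReal_nonneg, smul_eq_mul, mul_comm]

lemma SFaux_desc_poisson (r : ℝ≥0) {s : ℝ} (hs : 0 ≤ s) (k : ℕ) :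
    Integrable (fun n : ℕ => (n.descFactorial k : ℝ) * s ^ n) (poissonMeasure r) ∧
    ∫ n, (n.descFactorial k : ℝ) * s ^ n ∂(poissonMeasure r)
      = (s * r) ^ k * Real.exp (r * (s - 1)) := by
  have hg : ∀ n : ℕ, 0 ≤ (n.descFactorial k : ℝ) * s ^ n :=
    fun n => mul_nonneg (Nat.cast_nonneg _) (pow_nonneg hs n)
  refine SFaux_poisson_int r _ hg ?_
  have h := (SFaux_hasSum_desc k (s * r)).mul_left (Real.exp (-(r : ℝ)))
  have hfun : ∀ n : ℕ, Real.exp (-(r : ℝ)) * ((n.descFactorial k : ℝ) * (s * r) ^ n / n !)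
      = (n.descFactorial k : ℝ) * s ^ n * poissonPMFReal r n := by
    intro n
    rw [poissonPMFReal, mul_pow]
    ring
  have hval : Real.exp (-(r : ℝ)) * ((s * r) ^ k * Real.exp (s * r))
      = (s * r) ^ k * Real.exp (r * (s - 1)) := by
    rw [show (r:ℝ) * (s - 1) = -(r:ℝ) + s * r by ring, Real.exp_add]
    ring
  rw [← hval]
  exact h.congr_fun fun n => (hfun n).symm

lemma SFaux_desc2 (n : ℕ) : (n.descFactorial 2 : ℝ) = (n : ℝ) ^ 2 - n := by
  match n with
  | 0 => simp
  | (m + 1) =>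
    have : (m + 1).descFactorial 2 = m * (m + 1) := by
      rw [Nat.descFactorial_succ, Nat.descFactorial_one]
      simp
    rw [this]
    push_cast
    ring

lemma SFaux_desc3 (n : ℕ) :
    (n.descFactorial 3 : ℝ) = (n : ℝ) ^ 3 - 3 * (n : ℝ) ^ 2 + 2 * n := by
  match n with
  | 0 => simp
  | 1 => norm_num [Nat.descFactorial]
  | (m + 2) =>
    have : (m + 2).descFactorial 3 = m * ((m + 1) * (m + 2)) := by
      rw [Nat.descFactorial_succ, Nat.descFactorial_succ, Nat.descFactorial_one]
      simp
    rw [this]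
    push_cast
    ring

lemma SF_pois0 (r : ℝ≥0) {s : ℝ} (hs : 0 ≤ s) :
    Integrable (fun n : ℕ => s ^ n) (poissonMeasure r) ∧
    ∫ n, s ^ n ∂(poissonMeasure r) = Real.exp (r * (s - 1)) := by
  have h := SFaux_desc_poisson r hs 0
  simpa using h

lemma SF_pois1 (r : ℝ≥0) {s : ℝ} (hs : 0 ≤ s) :
    Integrable (fun n : ℕ => (n : ℝ) * s ^ n) (poissonMeasure r) ∧
    ∫ n, (n : ℝ) * s ^ n ∂(poissonMeasure r) = s * r * Real.exp (r * (s - 1)) := by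
  have h := SFaux_desc_poisson r hs 1
  simpa [Nat.descFactorial_one] using h

lemma SF_pois2 (r : ℝ≥0) {s : ℝ} (hs : 0 ≤ s) :
    Integrable (fun n : ℕ => (n : ℝ) ^ 2 * s ^ n) (poissonMeasure r) ∧
    ∫ n, (n : ℝ) ^ 2 * s ^ n ∂(poissonMeasure r)
      = ((s * r) ^ 2 + s * r) * Real.exp (r * (s - 1)) := by
  have h2 := SFaux_desc_poisson r hs 2
  have h1 := SF_pois1 r hs
  have hfun : (fun n : ℕ => (n : ℝ) ^ 2 * s ^ n)
      = fun n : ℕ => (n.descFactorial 2 : ℝ) * s ^ n + (n : ℝ) * s ^ n := by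
    funext n
    rw [SFaux_desc2]
    ring
  constructor
  · rw [hfun]; exact h2.1.add h1.1
  · rw [hfun, integral_add h2.1 h1.1, h2.2, h1.2]
    ring

lemma SF_pois3 (r : ℝ≥0) {s : ℝ} (hs : 0 ≤ s) :
    Integrable (fun n : ℕ => (n : ℝ) ^ 3 * s ^ n) (poissonMeasure r) ∧
    ∫ n, (n : ℝ) ^ 3 * s ^ n ∂(poissonMeasure r)
      = ((s * r) ^ 3 + 3 * (s * r) ^ 2 + s * r) * Real.exp (r * (s - 1)) := by
  have h3 := SFaux_desc_poisson r hs 3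
  have h2 := SFaux_desc_poisson r hs 2
  have h1 := SF_pois1 r hs
  have hfun : (fun n : ℕ => (n : ℝ) ^ 3 * s ^ n)
      = fun n : ℕ => (n.descFactorial 3 : ℝ) * s ^ n
          + (3 * ((n.descFactorial 2 : ℝ) * s ^ n) + (n : ℝ) * s ^ n) := by
    funext n
    rw [SFaux_desc3, SFaux_desc2]
    ring
  have hi : Integrable (fun n : ℕ => 3 * ((n.descFactorial 2 : ℝ) * s ^ n)
      + (n : ℝ) * s ^ n) (poissonMeasure r) := (h2.1.const_mul 3).add h1.1
  constructor
  · rw [hfun]; exact h3.1.add hi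
  · rw [hfun, integral_add h3.1 hi, integral_add (h2.1.const_mul 3) h1.1,
      integral_const_mul, h3.2, h2.2, h1.2]
    ring



lemma SF_comp {Ω : Type*} [MeasurableSpace Ω] (μ : Measure Ω) {X : Ω → ℕ}
    (hXm : Measurable X) {r : ℝ≥0} (hmap : μ.map X = poissonMeasure r) (f : ℕ → ℝ)
    (hf : Integrable f (poissonMeasure r)) :
    Integrable (fun ω => f (X ω)) μ ∧
      ∫ ω, f (X ω) ∂μ = ∫ n, f n ∂(poissonMeasure r) := by
  have hfm : Measurable f := measurable_from_nat
  constructor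
  · exact (integrable_map_measure hfm.aestronglyMeasurable hXm.aemeasurable).1
      (by rw [hmap]; exact hf)
  · rw [← hmap, integral_map hXm.aemeasurable hfm.aestronglyMeasurable]

lemma SF_indep_mul {Ω : Type*} [MeasurableSpace Ω] {μ : Measure Ω} {X Y : Ω → ℕ}
    (hindep : IndepFun X Y μ) (f g : ℕ → ℝ) (hf : ∀ n, 0 ≤ f n) (hg : ∀ n, 0 ≤ g n)
    (hfi : Integrable (fun ω => f (X ω)) μ) (hgi : Integrable (fun ω => g (Y ω)) μ) :
    Integrable (fun ω => f (X ω) * g (Y ω)) μ ∧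
      ∫ ω, f (X ω) * g (Y ω) ∂μ = (∫ ω, f (X ω) ∂μ) * ∫ ω, g (Y ω) ∂μ := by
  have hind2 : IndepFun (fun ω => f (X ω)) (fun ω => g (Y ω)) μ :=
    hindep.comp measurable_from_nat measurable_from_nat
  exact ⟨hind2.integrable_mul hfi hgi,
    hind2.integral_fun_mul_eq_mul_integral hfi.aestronglyMeasurable hgi.aestronglyMeasurable⟩

lemma SF_amgm {a b w : ℝ} (ha : 0 ≤ a) (hb : 0 ≤ b) (hw : 0 ≤ w)
    (hab : w * w = a * b) : 2 * w ≤ a + b := by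
  nlinarith [sq_nonneg (a - b), sq_nonneg (a + b - 2 * w)]

lemma SF_sqE {w E : ℝ} (hw : 0 ≤ w) (hE0 : 0 ≤ E) (hE1 : E ≤ 1) :
    (2 * w * E) ^ 2 ≤ 4 * w ^ 2 * E := by
  have hEE : E * E ≤ E := by nlinarith
  nlinarith [mul_le_mul_of_nonneg_left hEE (by positivity : (0:ℝ) ≤ 4 * w ^ 2)]

set_option maxHeartbeats 1000000 in
lemma SF_key {Ω : Type*} [MeasurableSpace Ω] (μ : Measure Ω) [IsProbabilityMeasure μ]
    {X Y : Ω → ℕ} (hXm : Measurable X) (hYm : Measurable Y) (hindep : IndepFun X Y μ)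
    {a b : ℝ} (ha : 0 < a) (hb : 0 < b)
    (hmapX : μ.map X = poissonMeasure a.toNNReal)
    (hmapY : μ.map Y = poissonMeasure b.toNNReal)
    {s : ℝ} (hs : 1 ≤ s) (huv : s * (s * a) = b) :
    |variance (fun ω => (min (X ω) (Y ω) : ℝ)) μ - a|
      ≤ (8 * (s * a) ^ 2 + 2 * (s * a) + 4 * a * (s * a))
          * Real.exp (a * (s - 1) + b * (1 / s - 1)) := by
  have hs0 : (0 : ℝ) < s := lt_of_lt_of_le one_pos hs
  have hsi0 : (0 : ℝ) ≤ 1 / s := by positivity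
  set w : ℝ := s * a with hwdef
  have hw0 : 0 ≤ w := by positivity
  have hab : w * w = a * b := by rw [hwdef, ← huv]; ring
  have hvw : 1 / s * b = w := by rw [← huv]; field_simp
  have hac : ((a.toNNReal : ℝ≥0) : ℝ) = a := Real.coe_toNNReal a ha.le
  have hbc : ((b.toNNReal : ℝ≥0) : ℝ) = b := Real.coe_toNNReal b hb.le
  set EA : ℝ := Real.exp (a * (s - 1)) with hEA
  set EB : ℝ := Real.exp (b * (1 / s - 1)) with hEB
  have hEA0 : 0 ≤ EA := (Real.exp_pos _).le
  have hEB0 : 0 ≤ EB := (Real.exp_pos _).le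
  rw [Real.exp_add, ← hEA, ← hEB]
  -- moments of X
  have hU0 := SF_comp μ hXm hmapX _ (SF_pois0 a.toNNReal hs0.le).1
  have hU0v : ∫ ω, s ^ X ω ∂μ = EA := by
    rw [hU0.2, (SF_pois0 a.toNNReal hs0.le).2, hac]
  have hU1 := SF_comp μ hXm hmapX _ (SF_pois1 a.toNNReal hs0.le).1
  have hU1v : ∫ ω, (X ω : ℝ) * s ^ X ω ∂μ = w * EA := by
    rw [hU1.2, (SF_pois1 a.toNNReal hs0.le).2, hac]
  have hU2 := SF_comp μ hXm hmapX _ (SF_pois2 a.toNNReal hs0.le).1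
  have hU2v : ∫ ω, (X ω : ℝ) ^ 2 * s ^ X ω ∂μ = (w ^ 2 + w) * EA := by
    rw [hU2.2, (SF_pois2 a.toNNReal hs0.le).2, hac]
  have hU3 := SF_comp μ hXm hmapX _ (SF_pois3 a.toNNReal hs0.le).1
  have hU3v : ∫ ω, (X ω : ℝ) ^ 3 * s ^ X ω ∂μ = (w ^ 3 + 3 * w ^ 2 + w) * EA := by
    rw [hU3.2, (SF_pois3 a.toNNReal hs0.le).2, hac]
  -- moments of Y
  have hV0 := SF_comp μ hYm hmapY _ (SF_pois0 b.toNNReal hsi0).1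
  have hV0v : ∫ ω, (1 / s) ^ Y ω ∂μ = EB := by
    rw [hV0.2, (SF_pois0 b.toNNReal hsi0).2, hbc]
  have hV1 := SF_comp μ hYm hmapY _ (SF_pois1 b.toNNReal hsi0).1
  have hV1v : ∫ ω, (Y ω : ℝ) * (1 / s) ^ Y ω ∂μ = w * EB := by
    rw [hV1.2, (SF_pois1 b.toNNReal hsi0).2, hbc, hvw]
  have hV2 := SF_comp μ hYm hmapY _ (SF_pois2 b.toNNReal hsi0).1
  have hV2v : ∫ ω, (Y ω : ℝ) ^ 2 * (1 / s) ^ Y ω ∂μ = (w ^ 2 + w) * EB := by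
    rw [hV2.2, (SF_pois2 b.toNNReal hsi0).2, hbc, hvw]
  -- plain moments of X (s = 1)
  have h10 : (0 : ℝ) ≤ 1 := zero_le_one
  have hx1p := SF_pois1 a.toNNReal h10
  have hx1p' : Integrable (fun n : ℕ => (n : ℝ)) (poissonMeasure a.toNNReal) ∧
      ∫ n, (n : ℝ) ∂(poissonMeasure a.toNNReal) = a := by
    constructor
    · have := hx1p.1; simpa using this
    · have := hx1p.2; simpa [hac] using this
  have hx := SF_comp μ hXm hmapX _ hx1p'.1
  have hxv : ∫ ω, (X ω : ℝ) ∂μ = a := by rw [hx.2, hx1p'.2]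
  have hx2p := SF_pois2 a.toNNReal h10
  have hx2p' : Integrable (fun n : ℕ => (n : ℝ) ^ 2) (poissonMeasure a.toNNReal) ∧
      ∫ n, (n : ℝ) ^ 2 ∂(poissonMeasure a.toNNReal) = a ^ 2 + a := by
    constructor
    · have := hx2p.1; simpa using this
    · have := hx2p.2; simpa [hac] using this
  have hx2 := SF_comp μ hXm hmapX _ hx2p'.1
  have hx2v : ∫ ω, (X ω : ℝ) ^ 2 ∂μ = a ^ 2 + a := by rw [hx2.2, hx2p'.2]
  -- the min and remainder functions
  set M : Ω → ℝ := fun ω => min ((X ω : ℝ)) ((Y ω : ℝ)) with hMdef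
  set R : Ω → ℝ := fun ω => (X ω : ℝ) - M ω with hRdef
  have hMmin : ∀ ω, M ω = min ((X ω : ℝ)) ((Y ω : ℝ)) := fun ω => rfl
  have hM0 : ∀ ω, 0 ≤ M ω := fun ω =>
    le_min (Nat.cast_nonneg _) (Nat.cast_nonneg _)
  have hMx : ∀ ω, M ω ≤ (X ω : ℝ) := fun ω => min_le_left _ _
  have hR0 : ∀ ω, 0 ≤ R ω := fun ω => sub_nonneg.2 (hMx ω)
  have hRx : ∀ ω, R ω ≤ (X ω : ℝ) := fun ω => by
    have := hM0 ω; rw [hRdef]; simp only; linarith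
  -- pointwise domination by the exponential weight
  have hRW : ∀ ω, R ω ≤ ((X ω : ℝ) - (Y ω : ℝ)) ^ 2 * (s ^ X ω * (1 / s) ^ Y ω) := by
    intro ω
    rcases le_or_gt (X ω) (Y ω) with h | h
    · have : M ω = (X ω : ℝ) := by rw [hMmin ω]; exact min_eq_left (by exact_mod_cast h)
      rw [hRdef]; simp only [this, sub_self]
      positivity
    · have hMy : M ω = (Y ω : ℝ) := by
        rw [hMmin ω]; exact min_eq_right (by exact_mod_cast h.le)
      have hRxy : R ω = (X ω : ℝ) - (Y ω : ℝ) := by rw [hRdef]; simp only [hMy]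
      have h1 : (1 : ℝ) ≤ (X ω : ℝ) - (Y ω : ℝ) := by
        have : Y ω + 1 ≤ X ω := h
        have := (Nat.cast_le (α := ℝ)).2 this
        push_cast at this; linarith
      have hW1 : (1 : ℝ) ≤ s ^ X ω * (1 / s) ^ Y ω := by
        have hd : Y ω + (X ω - Y ω) = X ω := Nat.add_sub_cancel' h.le
        have : s ^ X ω * (1 / s) ^ Y ω = s ^ (X ω - Y ω) := by
          rw [← hd, pow_add]
          rw [Nat.add_sub_cancel_left, one_div, inv_pow, mul_comm (s ^ Y ω), mul_assoc,
            mul_inv_cancel₀ (pow_ne_zero _ hs0.ne'), mul_one]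
        rw [this]
        exact one_le_pow₀ hs
      rw [hRxy]
      calc (X ω : ℝ) - (Y ω : ℝ) ≤ ((X ω : ℝ) - (Y ω : ℝ)) ^ 2 := le_self_pow₀ (by linarith) two_ne_zero
        _ ≤ ((X ω : ℝ) - (Y ω : ℝ)) ^ 2 * (s ^ X ω * (1 / s) ^ Y ω) :=
            le_mul_of_one_le_right (sq_nonneg _) hW1
  have hxRW : ∀ ω, (X ω : ℝ) * R ω
      ≤ (X ω : ℝ) * (((X ω : ℝ) - (Y ω : ℝ)) ^ 2 * (s ^ X ω * (1 / s) ^ Y ω)) :=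
    fun ω => mul_le_mul_of_nonneg_left (hRW ω) (Nat.cast_nonneg _)
  -- measurability
  have hxm : Measurable fun ω => (X ω : ℝ) :=
    (measurable_from_nat (f := (Nat.cast : ℕ → ℝ))).comp hXm
  have hym : Measurable fun ω => (Y ω : ℝ) :=
    (measurable_from_nat (f := (Nat.cast : ℕ → ℝ))).comp hYm
  have hMm : Measurable M := hxm.min hym
  have hRm : Measurable R := hxm.sub hMm
  -- integrability of the basic functions
  have iM : Integrable M μ := by
    refine Integrable.mono hx.1 hMm.aestronglyMeasurable (ae_of_all _ fun ω => ?_)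
    rw [Real.norm_eq_abs, Real.norm_eq_abs, abs_of_nonneg (hM0 ω),
      abs_of_nonneg (Nat.cast_nonneg _)]
    exact hMx ω
  have iR : Integrable R μ := hx.1.sub iM
  have iM2 : Integrable (fun ω => M ω ^ 2) μ := by
    refine Integrable.mono hx2.1 ((hMm.pow_const 2).aestronglyMeasurable)
      (ae_of_all _ fun ω => ?_)
    rw [Real.norm_eq_abs, Real.norm_eq_abs, abs_of_nonneg (by positivity : (0:ℝ) ≤ M ω ^ 2),
      abs_of_nonneg (by positivity : (0:ℝ) ≤ (X ω : ℝ) ^ 2)]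
    exact pow_le_pow_left₀ (hM0 ω) (hMx ω) 2
  have iR2 : Integrable (fun ω => R ω ^ 2) μ := by
    refine Integrable.mono hx2.1 ((hRm.pow_const 2).aestronglyMeasurable)
      (ae_of_all _ fun ω => ?_)
    rw [Real.norm_eq_abs, Real.norm_eq_abs, abs_of_nonneg (by positivity : (0:ℝ) ≤ R ω ^ 2),
      abs_of_nonneg (by positivity : (0:ℝ) ≤ (X ω : ℝ) ^ 2)]
    exact pow_le_pow_left₀ (hR0 ω) (hRx ω) 2
  have ixR : Integrable (fun ω => (X ω : ℝ) * R ω) μ := by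
    refine Integrable.mono hx2.1 ((hxm.mul hRm).aestronglyMeasurable)
      (ae_of_all _ fun ω => ?_)
    rw [Real.norm_eq_abs, Real.norm_eq_abs,
      abs_of_nonneg (mul_nonneg (Nat.cast_nonneg _) (hR0 ω)),
      abs_of_nonneg (by positivity : (0:ℝ) ≤ (X ω : ℝ) ^ 2), sq]
    exact mul_le_mul_of_nonneg_left (hRx ω) (Nat.cast_nonneg _)
  -- product moments via independence
  have hT20 := SF_indep_mul hindep (fun n : ℕ => (n : ℝ) ^ 2 * s ^ n)
    (fun n : ℕ => (1 / s) ^ n) (fun n => by positivity) (fun n => by positivity) hU2.1 hV0.1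
  have hT20v : ∫ ω, ((X ω : ℝ) ^ 2 * s ^ X ω) * ((1 / s) ^ Y ω) ∂μ
      = ((w ^ 2 + w) * EA) * EB := by simpa only [hU2v, hV0v] using hT20.2
  have hT11 := SF_indep_mul hindep (fun n : ℕ => (n : ℝ) * s ^ n)
    (fun n : ℕ => (n : ℝ) * (1 / s) ^ n) (fun n => by positivity) (fun n => by positivity)
    hU1.1 hV1.1
  have hT11v : ∫ ω, ((X ω : ℝ) * s ^ X ω) * ((Y ω : ℝ) * (1 / s) ^ Y ω) ∂μ
      = (w * EA) * (w * EB) := by simpa only [hU1v, hV1v] using hT11.2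
  have hT02 := SF_indep_mul hindep (fun n : ℕ => s ^ n)
    (fun n : ℕ => (n : ℝ) ^ 2 * (1 / s) ^ n) (fun n => by positivity) (fun n => by positivity)
    hU0.1 hV2.1
  have hT02v : ∫ ω, (s ^ X ω) * ((Y ω : ℝ) ^ 2 * (1 / s) ^ Y ω) ∂μ
      = EA * ((w ^ 2 + w) * EB) := by simpa only [hU0v, hV2v] using hT02.2
  have hT30 := SF_indep_mul hindep (fun n : ℕ => (n : ℝ) ^ 3 * s ^ n)
    (fun n : ℕ => (1 / s) ^ n) (fun n => by positivity) (fun n => by positivity) hU3.1 hV0.1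
  have hT30v : ∫ ω, ((X ω : ℝ) ^ 3 * s ^ X ω) * ((1 / s) ^ Y ω) ∂μ
      = ((w ^ 3 + 3 * w ^ 2 + w) * EA) * EB := by simpa only [hU3v, hV0v] using hT30.2
  have hT21 := SF_indep_mul hindep (fun n : ℕ => (n : ℝ) ^ 2 * s ^ n)
    (fun n : ℕ => (n : ℝ) * (1 / s) ^ n) (fun n => by positivity) (fun n => by positivity)
    hU2.1 hV1.1
  have hT21v : ∫ ω, ((X ω : ℝ) ^ 2 * s ^ X ω) * ((Y ω : ℝ) * (1 / s) ^ Y ω) ∂μ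
      = ((w ^ 2 + w) * EA) * (w * EB) := by simpa only [hU2v, hV1v] using hT21.2
  have hT12 := SF_indep_mul hindep (fun n : ℕ => (n : ℝ) * s ^ n)
    (fun n : ℕ => (n : ℝ) ^ 2 * (1 / s) ^ n) (fun n => by positivity) (fun n => by positivity)
    hU1.1 hV2.1
  have hT12v : ∫ ω, ((X ω : ℝ) * s ^ X ω) * ((Y ω : ℝ) ^ 2 * (1 / s) ^ Y ω) ∂μ
      = (w * EA) * ((w ^ 2 + w) * EB) := by simpa only [hU1v, hV2v] using hT12.2
  -- the dominating functions
  have hg2eq : (fun ω => ((X ω : ℝ) - (Y ω : ℝ)) ^ 2 * (s ^ X ω * (1 / s) ^ Y ω))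
      = fun ω => ((X ω : ℝ) ^ 2 * s ^ X ω) * ((1 / s) ^ Y ω)
        - (2 * (((X ω : ℝ) * s ^ X ω) * ((Y ω : ℝ) * (1 / s) ^ Y ω))
          - (s ^ X ω) * ((Y ω : ℝ) ^ 2 * (1 / s) ^ Y ω)) := by
    funext ω; ring
  have i2T11 : Integrable
      (fun ω => 2 * (((X ω : ℝ) * s ^ X ω) * ((Y ω : ℝ) * (1 / s) ^ Y ω))) μ :=
    hT11.1.const_mul 2
  have iG2 : Integrable (fun ω => 2 * (((X ω : ℝ) * s ^ X ω) * ((Y ω : ℝ) * (1 / s) ^ Y ω))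
      - (s ^ X ω) * ((Y ω : ℝ) ^ 2 * (1 / s) ^ Y ω)) μ := i2T11.sub hT02.1
  have ig2 : Integrable
      (fun ω => ((X ω : ℝ) - (Y ω : ℝ)) ^ 2 * (s ^ X ω * (1 / s) ^ Y ω)) μ := by
    rw [hg2eq]; exact hT20.1.sub iG2
  have vg2 : ∫ ω, ((X ω : ℝ) - (Y ω : ℝ)) ^ 2 * (s ^ X ω * (1 / s) ^ Y ω) ∂μ
      = 2 * w * (EA * EB) := by
    rw [hg2eq, integral_sub hT20.1 iG2, integral_sub i2T11 hT02.1,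
      integral_const_mul, hT20v, hT11v, hT02v]
    ring
  have hg3eq : (fun ω => (X ω : ℝ) * (((X ω : ℝ) - (Y ω : ℝ)) ^ 2
        * (s ^ X ω * (1 / s) ^ Y ω)))
      = fun ω => ((X ω : ℝ) ^ 3 * s ^ X ω) * ((1 / s) ^ Y ω)
        - (2 * (((X ω : ℝ) ^ 2 * s ^ X ω) * ((Y ω : ℝ) * (1 / s) ^ Y ω))
          - ((X ω : ℝ) * s ^ X ω) * ((Y ω : ℝ) ^ 2 * (1 / s) ^ Y ω)) := by
    funext ω; ring
  have i2T21 : Integrable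
      (fun ω => 2 * (((X ω : ℝ) ^ 2 * s ^ X ω) * ((Y ω : ℝ) * (1 / s) ^ Y ω))) μ :=
    hT21.1.const_mul 2
  have iG3 : Integrable
      (fun ω => 2 * (((X ω : ℝ) ^ 2 * s ^ X ω) * ((Y ω : ℝ) * (1 / s) ^ Y ω))
        - ((X ω : ℝ) * s ^ X ω) * ((Y ω : ℝ) ^ 2 * (1 / s) ^ Y ω)) μ := i2T21.sub hT12.1
  have ig3 : Integrable (fun ω => (X ω : ℝ)
      * (((X ω : ℝ) - (Y ω : ℝ)) ^ 2 * (s ^ X ω * (1 / s) ^ Y ω))) μ := by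
    rw [hg3eq]; exact hT30.1.sub iG3
  have vg3 : ∫ ω, (X ω : ℝ) * (((X ω : ℝ) - (Y ω : ℝ)) ^ 2 * (s ^ X ω * (1 / s) ^ Y ω)) ∂μ
      = (2 * w ^ 2 + w) * (EA * EB) := by
    rw [hg3eq, integral_sub hT30.1 iG3, integral_sub i2T21 hT12.1,
      integral_const_mul, hT30v, hT21v, hT12v]
    ring
  -- bounds on the moments of R
  have hA1 : ∫ ω, R ω ∂μ ≤ 2 * w * (EA * EB) :=
    (integral_mono iR ig2 hRW).trans_eq vg2
  have hA0 : 0 ≤ ∫ ω, R ω ∂μ := integral_nonneg hR0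
  have hB1 : ∫ ω, (X ω : ℝ) * R ω ∂μ ≤ (2 * w ^ 2 + w) * (EA * EB) :=
    (integral_mono ixR ig3 hxRW).trans_eq vg3
  have hB0 : 0 ≤ ∫ ω, (X ω : ℝ) * R ω ∂μ :=
    integral_nonneg fun ω => mul_nonneg (Nat.cast_nonneg _) (hR0 ω)
  have hCB : ∫ ω, R ω ^ 2 ∂μ ≤ ∫ ω, (X ω : ℝ) * R ω ∂μ := by
    refine integral_mono iR2 ixR fun ω => ?_
    rw [sq]
    exact mul_le_mul_of_nonneg_right (hRx ω) (hR0 ω)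
  have hC0 : 0 ≤ ∫ ω, R ω ^ 2 ∂μ := integral_nonneg fun ω => sq_nonneg _
  -- identities for the mean and second moment of M
  have hReq : ∫ ω, R ω ∂μ = a - ∫ ω, M ω ∂μ := by
    have h1 : ∫ ω, R ω ∂μ = (∫ ω, (X ω : ℝ) ∂μ) - ∫ ω, M ω ∂μ := integral_sub hx.1 iM
    rw [h1, hxv]
  have hfun2 : (fun ω => M ω ^ 2)
      = fun ω => (X ω : ℝ) ^ 2 - (2 * ((X ω : ℝ) * R ω) - R ω ^ 2) := by
    funext ω
    simp only [hRdef]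
    ring
  have i2xR : Integrable (fun ω => 2 * ((X ω : ℝ) * R ω)) μ := ixR.const_mul 2
  have iG4 : Integrable (fun ω => 2 * ((X ω : ℝ) * R ω) - R ω ^ 2) μ := i2xR.sub iR2
  have hEM2 : ∫ ω, M ω ^ 2 ∂μ
      = (a ^ 2 + a) - (2 * (∫ ω, (X ω : ℝ) * R ω ∂μ) - ∫ ω, R ω ^ 2 ∂μ) := by
    rw [hfun2, integral_sub hx2.1 iG4, integral_sub i2xR iR2, integral_const_mul, hx2v]
  -- variance formula
  have hml : MemLp M 2 μ := (memLp_two_iff_integrable_sq hMm.aestronglyMeasurable).2 iM2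
  have hvar : variance M μ = (∫ ω, M ω ^ 2 ∂μ) - (∫ ω, M ω ∂μ) ^ 2 := by
    have h := variance_eq_sub hml
    simpa only [Pi.pow_apply] using h
  -- final estimates
  have hE0 : 0 ≤ EA * EB := mul_nonneg hEA0 hEB0
  have hE1 : EA * EB ≤ 1 := by
    rw [hEA, hEB, ← Real.exp_add]
    have h2w : 2 * w ≤ a + b := SF_amgm ha.le hb.le hw0 hab
    have e1 : a * (s - 1) = w - a := by rw [hwdef]; ring
    have e2 : b * (1 / s - 1) = w - b := by rw [← hvw]; ring
    have : a * (s - 1) + b * (1 / s - 1) ≤ 0 := by rw [e1, e2]; linarith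
    calc Real.exp (a * (s - 1) + b * (1 / s - 1)) ≤ Real.exp 0 := Real.exp_le_exp.2 this
      _ = 1 := Real.exp_zero
  have haA : a * (∫ ω, R ω ∂μ) ≤ a * (2 * w * (EA * EB)) :=
    mul_le_mul_of_nonneg_left hA1 ha.le
  have hA2 : (∫ ω, R ω ∂μ) ^ 2 ≤ (2 * w * (EA * EB)) ^ 2 := pow_le_pow_left₀ hA0 hA1 2
  have hE2 : (2 * w * (EA * EB)) ^ 2 ≤ 4 * w ^ 2 * (EA * EB) := SF_sqE hw0 hE0 hE1
  have hKE1 : 0 ≤ (8 * w ^ 2 + 2 * w) * (EA * EB) := by positivity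
  have hKE2 : 0 ≤ 4 * a * w * (EA * EB) := by positivity
  have hvareq : variance M μ - a
      = -(2 * (∫ ω, (X ω : ℝ) * R ω ∂μ)) + (∫ ω, R ω ^ 2 ∂μ)
        + 2 * a * (∫ ω, R ω ∂μ) - (∫ ω, R ω ∂μ) ^ 2 := by
    have hM : ∫ ω, M ω ∂μ = a - ∫ ω, R ω ∂μ := by linarith [hReq]
    rw [hvar, hEM2, hM]
    ring
  have hKE3 : 0 ≤ w ^ 2 * (EA * EB) := by positivity
  have hKE4 : 0 ≤ w * (EA * EB) := by positivity
  have haA0 : 0 ≤ a * ∫ ω, R ω ∂μ := mul_nonneg ha.le hA0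
  have hAsq : 0 ≤ (∫ ω, R ω ∂μ) ^ 2 := sq_nonneg _
  rw [abs_le]
  constructor
  · linarith
  · linarith



lemma SF_exp_lin_tendsto {κ : ℝ} (hκ : κ < 0) (C1 C2 : ℝ) :
    Tendsto (fun t => (C1 * t + C2) * Real.exp (κ * t)) atTop (nhds 0) := by
  have hκ0 : κ ≠ 0 := ne_of_lt hκ
  have hpos : (0 : ℝ) < -κ := by linarith
  have hlin : Tendsto (fun t : ℝ => -κ * t) atTop atTop :=
    tendsto_id.const_mul_atTop hpos
  have h1 : Tendsto (fun t : ℝ => t * Real.exp (κ * t)) atTop (nhds 0) := by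
    have hcomp := (Real.tendsto_pow_mul_exp_neg_atTop_nhds_zero 1).comp hlin
    have h := hcomp.const_mul (-1 / κ)
    rw [mul_zero] at h
    refine Tendsto.congr (fun t => ?_) h
    have : -(-κ * t) = κ * t := by ring
    simp only [Function.comp_apply, pow_one, this]
    field_simp
  have h2 : Tendsto (fun t : ℝ => Real.exp (κ * t)) atTop (nhds 0) := by
    have hcomp := Real.tendsto_exp_neg_atTop_nhds_zero.comp hlin
    refine Tendsto.congr (fun t => ?_) hcomp
    simp only [Function.comp_apply]
    congr 1
    ring
  have := (h1.const_mul C1).add (h2.const_mul C2)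
  rw [mul_zero, mul_zero, add_zero] at this
  refine Tendsto.congr (fun t => ?_) this
  ring

lemma SF_main {Ω : Type*} [MeasurableSpace Ω] (μ : Measure Ω) [IsProbabilityMeasure μ]
    (lamP lamV : ℝ) (hP : 0 < lamP) (hV : 0 < lamV) (hlt : lamP < lamV)
    (X Y : ℝ → Ω → ℕ)
    (hXm : ∀ t, 0 < t → Measurable (X t)) (hYm : ∀ t, 0 < t → Measurable (Y t))
    (hindep : ∀ t, 0 < t → IndepFun (X t) (Y t) μ)
    (hX : ∀ t, 0 < t → μ.map (X t) = poissonMeasure (lamP * t).toNNReal)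
    (hY : ∀ t, 0 < t → μ.map (Y t) = poissonMeasure (lamV * t).toNNReal) :
    Tendsto (fun t => variance (fun ω => (min (X t ω) (Y t ω) : ℝ)) μ / t) atTop
      (nhds lamP) := by
  set s : ℝ := Real.sqrt (lamV / lamP) with hsdef
  have hs2 : s ^ 2 = lamV / lamP := Real.sq_sqrt (by positivity)
  have hs1 : 1 ≤ s := by
    have h1 : (1 : ℝ) ≤ lamV / lamP := (one_le_div hP).2 hlt.le
    calc (1 : ℝ) = Real.sqrt 1 := Real.sqrt_one.symm
      _ ≤ s := Real.sqrt_le_sqrt h1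
  have hs0 : (0 : ℝ) < s := lt_of_lt_of_le one_pos hs1
  have hb' : s * (s * lamP) = lamV := by
    rw [show s * (s * lamP) = s ^ 2 * lamP by ring, hs2]
    field_simp
  set L : ℝ := s * lamP with hL
  have hL0 : 0 < L := by rw [hL]; positivity
  have hLL : L * L = lamP * lamV := by
    rw [hL, show s * lamP * (s * lamP) = s ^ 2 * (lamP * lamP) by ring, hs2]
    field_simp
  set κ : ℝ := lamP * (s - 1) + lamV * (1 / s - 1) with hκ
  have hinv : lamV * (1 / s) = L := by
    rw [← hb', hL]
    field_simp
  have hκ_eq : κ = 2 * L - lamP - lamV := by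
    rw [hκ]
    have : lamV * (1 / s - 1) = lamV * (1 / s) - lamV := by ring
    rw [this, hinv, hL]
    ring
  have hκ_neg : κ < 0 := by
    have h0 : lamP - lamV ≠ 0 := by intro h; linarith [sub_eq_zero.1 h]
    have hsqp : 0 < (lamP - lamV) ^ 2 :=
      lt_of_le_of_ne (sq_nonneg _) (Ne.symm (pow_ne_zero 2 h0))
    rw [hκ_eq]
    nlinarith [hLL, hsqp, hL0.le, hP.le, hV.le]
  set ψ : ℝ → ℝ := fun t => ((8 * L ^ 2 + 4 * lamP * L) * t + 2 * L) * Real.exp (κ * t) with hψdef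
  have hψ : Tendsto ψ atTop (nhds 0) := SF_exp_lin_tendsto hκ_neg _ _
  have key_t : ∀ t : ℝ, 1 ≤ t →
      |variance (fun ω => (min (X t ω) (Y t ω) : ℝ)) μ / t - lamP| ≤ ψ t := by
    intro t ht
    have ht0 : (0 : ℝ) < t := lt_of_lt_of_le one_pos ht
    have huv_t : s * (s * (lamP * t)) = lamV * t := by
      rw [show s * (s * (lamP * t)) = (s * (s * lamP)) * t by ring, hb']
    have h := SF_key μ (hXm t ht0) (hYm t ht0) (hindep t ht0)
      (mul_pos hP ht0) (mul_pos hV ht0) (hX t ht0) (hY t ht0) hs1 huv_t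
    have hexp : (lamP * t) * (s - 1) + (lamV * t) * (1 / s - 1) = κ * t := by
      rw [hκ]; ring
    have hRHS : (8 * (s * (lamP * t)) ^ 2 + 2 * (s * (lamP * t))
          + 4 * (lamP * t) * (s * (lamP * t)))
        * Real.exp ((lamP * t) * (s - 1) + (lamV * t) * (1 / s - 1)) = ψ t * t := by
      rw [hexp, hψdef, hL]
      ring
    rw [hRHS] at h
    have hquot : variance (fun ω => (min (X t ω) (Y t ω) : ℝ)) μ / t - lamP
        = (variance (fun ω => (min (X t ω) (Y t ω) : ℝ)) μ - lamP * t) / t := by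
      field_simp
    rw [hquot, abs_div, abs_of_pos ht0, div_le_iff₀ ht0]
    exact h
  refine tendsto_of_tendsto_of_tendsto_of_le_of_le'
    (show Tendsto (fun t => lamP - ψ t) atTop (nhds lamP) by
      simpa using tendsto_const_nhds.sub hψ)
    (show Tendsto (fun t => lamP + ψ t) atTop (nhds lamP) by
      simpa using tendsto_const_nhds.add hψ) ?_ ?_
  · filter_upwards [eventually_ge_atTop (1 : ℝ)] with t ht
    have := abs_le.1 (key_t t ht)
    linarith [this.1]
  · filter_upwards [eventually_ge_atTop (1 : ℝ)] with t ht
    have := abs_le.1 (key_t t ht)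
    linarith [this.2]


end SFauxiliary

/-- If `λP, λV > 0`, `λP ≠ λV`, and for each `t > 0`, `X t` and `Y t` are
independent Poisson random variables with means `λP·t` and `λV·t`, then
`Var[min(X_t, Y_t)] / t → min(λP, λV)` as `t → ∞`. -/
theorem synchronized_flow_variance_rate_unequal
    {Ω : Type*} [MeasurableSpace Ω] (μ : Measure Ω) [IsProbabilityMeasure μ]
    (lamP lamV : ℝ) (hP : 0 < lamP) (hV : 0 < lamV) (hne : lamP ≠ lamV)
    (X Y : ℝ → Ω → ℕ)
    (hXm : ∀ t, 0 < t → Measurable (X t)) (hYm : ∀ t, 0 < t → Measurable (Y t))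
    (hindep : ∀ t, 0 < t → IndepFun (X t) (Y t) μ)
    (hX : ∀ t, 0 < t → μ.map (X t) = poissonMeasure (lamP * t).toNNReal)
    (hY : ∀ t, 0 < t → μ.map (Y t) = poissonMeasure (lamV * t).toNNReal) :
    Tendsto (fun t => variance (fun ω => (min (X t ω) (Y t ω) : ℝ)) μ / t) atTop
      (nhds (min lamP lamV)) := by
  rcases hne.lt_or_gt with h | h
  · rw [min_eq_left h.le]
    exact SF_main μ lamP lamV hP hV h X Y hXm hYm hindep hX hY
  · rw [min_eq_right h.le]
    have hmain := SF_main μ lamV lamP hV hP h Y X hYm hXm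
      (fun t ht => (hindep t ht).symm) hY hX
    have hswap : (fun t => variance (fun ω => (min (X t ω) (Y t ω) : ℝ)) μ / t)
        = fun t => variance (fun ω => (min (Y t ω) (X t ω) : ℝ)) μ / t := by
      funext t
      have hmc : (fun ω => (min (X t ω) (Y t ω) : ℝ))
          = fun ω => (min (Y t ω) (X t ω) : ℝ) := funext fun ω => min_comm _ _
      rw [hmc]
    rw [hswap]
    exact hmain
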